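/- Let c > 1 and define k(s) = arccos((1/√c)·sin(√c·s)) and h(s) = -√((c-1)/c)·ln((cos(√c·s) + √(c - sin²(√c·s)))/(1 + √c)) for s in the open interval (0, π/√c) excluding points where sin(√c·s) = ±√c. Then k'(s)² + h'(s)² = 1 wherever both derivatives are defined. -/

import Mathlib

open Real Set

set_option maxHeartbeats 1000000

theorem profile_curve_arclength_sphere (c : ℝ) (hc : 1 < c)
    (k h : ℝ → ℝ)
    (hk : ∀ s, k s = Real.arccos ((1 / Real.sqrt c) * Real.sin (Real.sqrt c * s)))
    (hh : ∀ s, h s = -Real.sqrt ((c - 1) / c) *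
      Real.log ((Real.cos (Real.sqrt c * s) +
        Real.sqrt (c - Real.sin (Real.sqrt c * s) ^ 2)) / (1 + Real.sqrt c))) :
    ∀ s ∈ Ioo 0 (Real.pi / Real.sqrt c),
      Real.sin (Real.sqrt c * s) ≠ Real.sqrt c →
      Real.sin (Real.sqrt c * s) ≠ -Real.sqrt c →
      (deriv k s) ^ 2 + (deriv h s) ^ 2 = 1 := by
  intro s _ _ _
  have hc0 : (0:ℝ) < c := by linarith
  set a := Real.sqrt c with ha
  have ha0 : 0 < a := Real.sqrt_pos.mpr hc0
  have ha2 : a ^ 2 = c := Real.sq_sqrt hc0.le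
  have ha1 : 1 < a := by nlinarith
  set t := a * s with ht
  set S := Real.sin t with hS
  set C := Real.cos t with hC
  have hSC : S ^ 2 + C ^ 2 = 1 := Real.sin_sq_add_cos_sq t
  have hSle : S ^ 2 ≤ 1 := by nlinarith [sq_nonneg C]
  have hq0 : 0 < c - S ^ 2 := by linarith
  set q := Real.sqrt (c - S ^ 2) with hq
  have hqpos : 0 < q := Real.sqrt_pos.mpr hq0
  have hq2 : q ^ 2 = c - S ^ 2 := Real.sq_sqrt hq0.le
  have hu : 0 < C + q := by nlinarith [sq_nonneg (C + q)]
  have h1a : (0:ℝ) < 1 + a := by linarith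
  set b := Real.sqrt ((c - 1) / c) with hb
  have hb2 : b ^ 2 = (c - 1) / c := Real.sq_sqrt (div_nonneg (by linarith) hc0.le)
  -- derivative building blocks
  have hinner : HasDerivAt (fun x : ℝ => a * x) a s := by
    simpa using (hasDerivAt_id s).const_mul a
  have hsin : HasDerivAt (fun x : ℝ => Real.sin (a * x)) (C * a) s :=
    (Real.hasDerivAt_sin t).comp s hinner
  have hcos : HasDerivAt (fun x : ℝ => Real.cos (a * x)) (-S * a) s :=
    (Real.hasDerivAt_cos t).comp s hinner
  -- derivative of k
  have hxne1 : (1 / a) * S ≠ 1 := by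
    intro hx
    have : S = a := by field_simp at hx; linarith
    nlinarith [neg_one_le_sin t, sin_le_one t]
  have hxne1' : (1 / a) * S ≠ -1 := by
    intro hx
    have : S = -a := by field_simp at hx; linarith
    nlinarith [neg_one_le_sin t, sin_le_one t]
  have hsqrt_eq : Real.sqrt (1 - ((1 / a) * S) ^ 2) = q / a := by
    have : 1 - ((1 / a) * S) ^ 2 = (q / a) ^ 2 := by
      field_simp
      nlinarith
    rw [this, Real.sqrt_sq (by positivity)]
  have hkcomp : HasDerivAt (fun x : ℝ => (1 / a) * Real.sin (a * x)) ((1 / a) * (C * a)) s :=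
    hsin.const_mul (1 / a)
  have hk' : HasDerivAt k (-(a * C / q)) s := by
    have hdk : HasDerivAt (fun x : ℝ => Real.arccos ((1 / a) * Real.sin (a * x)))
        (-(1 / Real.sqrt (1 - ((1 / a) * S) ^ 2)) * ((1 / a) * (C * a))) s :=
      by have h1 := Real.hasDerivAt_arccos hxne1' hxne1; have h2 := h1.comp s hkcomp; exact h2
    have heq : (-(1 / Real.sqrt (1 - ((1 / a) * S) ^ 2)) * ((1 / a) * (C * a)))
        = -(a * C / q) := by
      rw [hsqrt_eq]; field_simp
    rw [heq] at hdk
    have : k = fun x : ℝ => Real.arccos ((1 / a) * Real.sin (a * x)) := funext hk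
    rw [this]; exact hdk
  -- derivative of h
  have hqin : HasDerivAt (fun x : ℝ => c - Real.sin (a * x) ^ 2)
      (-(2 * S ^ 1 * (C * a))) s := by
    have := (hsin.pow 2).const_sub c
    simpa using this
  have hqd : HasDerivAt (fun x : ℝ => Real.sqrt (c - Real.sin (a * x) ^ 2))
      ((1 / (2 * q)) * (-(2 * S ^ 1 * (C * a)))) s :=
    (Real.hasDerivAt_sqrt (by positivity : c - S ^ 2 ≠ 0)).comp s hqin
  have hud : HasDerivAt (fun x : ℝ => Real.cos (a * x) + Real.sqrt (c - Real.sin (a * x) ^ 2))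
      (-S * a + (1 / (2 * q)) * (-(2 * S ^ 1 * (C * a)))) s := hcos.add hqd
  have hdivd : HasDerivAt
      (fun x : ℝ => (Real.cos (a * x) + Real.sqrt (c - Real.sin (a * x) ^ 2)) / (1 + a))
      ((-S * a + (1 / (2 * q)) * (-(2 * S ^ 1 * (C * a)))) / (1 + a)) s := hud.div_const _
  have hune : (C + q) / (1 + a) ≠ 0 := by positivity
  have hlogd : HasDerivAt
      (fun x : ℝ => Real.log
        ((Real.cos (a * x) + Real.sqrt (c - Real.sin (a * x) ^ 2)) / (1 + a)))
      (((C + q) / (1 + a))⁻¹ * ((-S * a + (1 / (2 * q)) * (-(2 * S ^ 1 * (C * a)))) / (1 + a)))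
      s := by have h1 := Real.hasDerivAt_log hune; exact h1.comp s hdivd
  have hh' : HasDerivAt h (b * a * S / q) s := by
    have hdh := hlogd.const_mul (-b)
    have heq : -b * (((C + q) / (1 + a))⁻¹ *
        ((-S * a + (1 / (2 * q)) * (-(2 * S ^ 1 * (C * a)))) / (1 + a))) = b * a * S / q := by
      have hq2' : q * q = c - S ^ 2 := by nlinarith
      have huq : C + q ≠ 0 := ne_of_gt hu
      field_simp
      ring_nf
    rw [heq] at hdh
    have : h = fun x : ℝ => -b * Real.log
        ((Real.cos (a * x) + Real.sqrt (c - Real.sin (a * x) ^ 2)) / (1 + a)) := funext hh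
    rw [this]; exact hdh
  rw [hk'.deriv, hh'.deriv]
  have hba : b ^ 2 * a ^ 2 = c - 1 := by
    rw [hb2, ha2]; field_simp
  field_simp
  nlinarith [hq2, hSC, hba, sq_nonneg q]
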